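/- Let (G,B) be an enveloping pair for a Bol algebra B over a field K of characteristic 0, with G finite-dimensional. If the Killing form κ of G is nondegenerate (in particular, if G is a simple Lie algebra), then the Killing–Ricci form β of B, i.e., the restriction of κ to B, is nondegenerate. -/

import Mathlib

variable (K : Type*) {G : Type*} [Field K] [LieRing G] [LieAlgebra K G]

/-- The span of brackets `⁅u, w⁆`, `u ∈ U`, `w ∈ W`, for subspaces of a Lie algebra. -/
def lbrk (U W : Submodule K G) : Submodule K G :=
  Submodule.span K {z | ∃ u ∈ U, ∃ w ∈ W, z = ⁅u, w⁆}

/-- `(G, B)` is an enveloping pair for a Bol algebra: `G = B + [B,B]`,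
`B ∩ [B,B] = 0` and `[B,[B,B]] ⊆ B`. -/
def IsEnvPair (B : Submodule K G) : Prop :=
  B ⊔ lbrk K B B = ⊤ ∧ B ⊓ lbrk K B B = ⊥ ∧ lbrk K B (lbrk K B B) ≤ B

/-- `π` is the projection of `G` onto `B` along `[B,B]`. -/
def IsProjOntoB (B : Submodule K G) (π : G →ₗ[K] G) : Prop :=
  (∀ g, π g ∈ B) ∧ (∀ x ∈ B, π x = x) ∧ (∀ y ∈ lbrk K B B, π y = 0)

/-- The span of Bol products `ξ·η = π(⁅ξ,η⁆)` for `ξ ∈ U`, `η ∈ W`. -/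
def bMul (π : G →ₗ[K] G) (U W : Submodule K G) : Submodule K G :=
  Submodule.span K {z | ∃ u ∈ U, ∃ w ∈ W, z = π ⁅u, w⁆}

/-- The span of Bol triple products `(ξ,η,ζ) = ⁅ζ,⁅ξ,η⁆⁆` for
`ξ ∈ U`, `η ∈ W`, `ζ ∈ X`. -/
def bTri (U W X : Submodule K G) : Submodule K G :=
  Submodule.span K {z | ∃ u ∈ U, ∃ w ∈ W, ∃ x ∈ X, z = ⁅x, ⁅u, w⁆⁆}

/-- A subspace `V ⊆ B` is an ideal of the Bol algebra `B` if `V·B ⊆ V` and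
`(V,B,B) ⊆ V`. -/
def IsBolIdealOf (B : Submodule K G) (π : G →ₗ[K] G) (V : Submodule K G) : Prop :=
  V ≤ B ∧ bMul K π V B ≤ V ∧ bTri K V B B ≤ V

/-- The derived series of a Bol ideal: `V⁽⁰⁾ = V`,
`V⁽ⁿ⁺¹⁾ = V⁽ⁿ⁾·V⁽ⁿ⁾ + (V⁽ⁿ⁾,V⁽ⁿ⁾,B)`. -/
def bolDer (B : Submodule K G) (π : G →ₗ[K] G) (V : Submodule K G) :
    ℕ → Submodule K G
  | 0 => V
  | n + 1 => bMul K π (bolDer B π V n) (bolDer B π V n)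
      ⊔ bTri K (bolDer B π V n) (bolDer B π V n) B

/-- The Lie derived series of a subspace: `W⁽⁰⁾ = W`, `W⁽ⁿ⁺¹⁾ = [W⁽ⁿ⁾, W⁽ⁿ⁾]`. -/
def lieDer (W : Submodule K G) : ℕ → Submodule K G
  | 0 => W
  | n + 1 => lbrk K (lieDer W n) (lieDer W n)

section Aux

variable {K}

lemma lie_mem_lbrk {U W : Submodule K G} {u w : G} (hu : u ∈ U) (hw : w ∈ W) :
    ⁅u, w⁆ ∈ lbrk K U W :=
  Submodule.subset_span ⟨u, hu, w, hw, rfl⟩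

/-- For a fixed `x`, if `⁅z, x⁆ ∈ X` for all generators `z` of a span, then
`⁅u, x⁆ ∈ X` for all `u` in the span. -/
lemma lie_mem_of_span_left {s : Set G} {X : Submodule K G} {x : G}
    (h : ∀ z ∈ s, ⁅z, x⁆ ∈ X) {u : G} (hu : u ∈ Submodule.span K s) : ⁅u, x⁆ ∈ X := by
  induction hu using Submodule.span_induction with
  | mem z hz => exact h z hz
  | zero => simp only [zero_lie]; exact X.zero_mem
  | add a b _ _ ha hb => rw [add_lie]; exact X.add_mem ha hb
  | smul c a _ ha => rw [smul_lie]; exact X.smul_mem c ha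

end Aux

/-- Let `(G,B)` be an enveloping pair for a Bol algebra over a field of
characteristic zero, with `G` finite-dimensional.  If the Killing form `κ` of `G` is
nondegenerate (in particular if `G` is simple), then the Killing–Ricci form `β` of `B`,
i.e. the restriction of `κ` to `B`, is nondegenerate. -/
theorem killingRicci_nondegenerate_of_killing_nondegenerate [CharZero K]
    [FiniteDimensional K G]
    (B : Submodule K G) (hpair : IsEnvPair K B)
    (hκ : ∀ x : G, (∀ y : G, killingForm K G x y = 0) → x = 0) :
    ∀ ξ ∈ B, (∀ η ∈ B, killingForm K G ξ η = 0) → ξ = 0 := by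
  obtain ⟨hsup, hinf, hBMle⟩ := hpair
  set M : Submodule K G := lbrk K B B with hM
  -- basic bracket inclusions
  have hBB : ∀ x ∈ B, ∀ y ∈ B, ⁅x, y⁆ ∈ M := fun x hx y hy => lie_mem_lbrk hx hy
  have hBM : ∀ x ∈ B, ∀ m ∈ M, ⁅x, m⁆ ∈ B := fun x hx m hm => hBMle (lie_mem_lbrk hx hm)
  have hMB : ∀ m ∈ M, ∀ x ∈ B, ⁅m, x⁆ ∈ B := by
    intro m hm x hx
    rw [show ⁅m, x⁆ = -⁅x, m⁆ by rw [lie_skew]]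
    exact B.neg_mem (hBM x hx m hm)
  have hMM : ∀ m ∈ M, ∀ n ∈ M, ⁅m, n⁆ ∈ M := by
    intro m hm n hn
    refine lie_mem_of_span_left (fun z hz => ?_) hm
    obtain ⟨a, ha, b, hb, rfl⟩ := hz
    rw [lie_lie]
    exact M.sub_mem (hBB a ha _ (hBM b hb n hn)) (hBB b hb _ (hBM a ha n hn))
  -- complementary projections
  have hcompl : IsCompl B M := ⟨disjoint_iff.2 hinf, codisjoint_iff.2 hsup⟩
  set πB : G →ₗ[K] G := B.subtype ∘ₗ B.projectionOnto M hcompl with hπB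
  set πM : G →ₗ[K] G := M.subtype ∘ₗ M.projectionOnto B hcompl.symm with hπM
  have hπB_mem : ∀ x : G, πB x ∈ B := fun x => SetLike.coe_mem _
  have hπM_mem : ∀ x : G, πM x ∈ M := fun x => SetLike.coe_mem _
  have hπB_eq : ∀ x ∈ B, πB x = x := fun x hx => by
    rw [hπB]; exact congrArg (Submodule.subtype B)
      (Submodule.projectionOnto_apply_left hcompl ⟨x, hx⟩)
  have hπM_eq : ∀ x ∈ M, πM x = x := fun x hx => by
    rw [hπM]; exact congrArg (Submodule.subtype M)
      (Submodule.projectionOnto_apply_left hcompl.symm ⟨x, hx⟩)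
  have hπB_zero : ∀ x ∈ M, πB x = 0 := fun x hx => by
    rw [hπB, LinearMap.comp_apply, Submodule.projectionOnto_apply_of_mem_right hcompl hx, map_zero]
  have hπM_zero : ∀ x ∈ B, πM x = 0 := fun x hx => by
    rw [hπM, LinearMap.comp_apply, Submodule.projectionOnto_apply_of_mem_right hcompl.symm hx, map_zero]
  have hsum : ∀ x : G, πB x + πM x = x := fun x =>
    Submodule.projection_add_projection_eq_self hcompl x
  -- any endomorphism swapping B and M has zero trace
  have hzero : ∀ f : Module.End K G, (∀ x ∈ B, f x ∈ M) → (∀ x ∈ M, f x ∈ B) →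
      LinearMap.trace K G f = 0 := by
    intro f hfB hfM
    have e1 : f * πB = πM * (f * πB) := by
      ext x
      exact (hπM_eq _ (hfB _ (hπB_mem x))).symm
    have e2 : f * πM = πB * (f * πM) := by
      ext x
      exact (hπB_eq _ (hfM _ (hπM_mem x))).symm
    have hBM0 : πB * πM = 0 := by
      ext x; exact hπB_zero _ (hπM_mem x)
    have hMB0 : πM * πB = 0 := by
      ext x; exact hπM_zero _ (hπB_mem x)
    have t1 : LinearMap.trace K G (f * πB) = 0 := by
      rw [e1, LinearMap.trace_mul_comm, mul_assoc, hBM0, mul_zero, map_zero]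
    have t2 : LinearMap.trace K G (f * πM) = 0 := by
      rw [e2, LinearMap.trace_mul_comm, mul_assoc, hMB0, mul_zero, map_zero]
    have hf : f = f * πB + f * πM := by
      ext x
      show f x = f (πB x) + f (πM x)
      rw [← map_add, hsum]
    rw [hf, map_add, t1, t2, add_zero]
  -- Killing form pairs B with M trivially
  have hkBM : ∀ ξ ∈ B, ∀ m ∈ M, killingForm K G ξ m = 0 := by
    intro ξ hξ m hm
    rw [killingForm_apply_apply]
    refine hzero _ (fun x hx => ?_) (fun x hx => ?_)
    · exact hBB ξ hξ _ (hMB m hm x hx)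
    · exact hBM ξ hξ _ (hMM m hm x hx)
  intro ξ hξ hη
  apply hκ
  intro y
  have : killingForm K G ξ (πB y + πM y) = 0 := by
    rw [map_add]
    rw [hη _ (hπB_mem y), hkBM ξ hξ _ (hπM_mem y), add_zero]
  rwa [hsum] at this
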